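/- Let L ⊆ M be number fields with L totally real and [M : L] = 2, and suppose M admits at least one ring homomorphism M → ℝ (i.e., M has a real embedding). Then there exists a unit x of 𝒪_M such that N_{M/L}(x) = 1 and x has infinite order in the unit group (x^k ≠ 1 for every integer k ≥ 1). -/

import Mathlib

open NumberField

section Aux

open NumberField.InfinitePlace Module

/-- Rank comparison: an injective hom between unit groups mod torsion forces rank ≤ rank. -/
lemma aux_rank_le {L M : Type*} [Field L] [NumberField L] [Field M] [NumberField M]
    (g : ((𝓞 M)ˣ ⧸ NumberField.Units.torsion M) →* ((𝓞 L)ˣ ⧸ NumberField.Units.torsion L))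
    (hg : Function.Injective g) :
    NumberField.Units.rank M ≤ NumberField.Units.rank L := by
  classical
  letI : Module ℤ (Additive ((𝓞 M)ˣ ⧸ NumberField.Units.torsion M)) :=
    AddCommGroup.toIntModule (Additive ((𝓞 M)ˣ ⧸ NumberField.Units.torsion M))
  letI : Module ℤ (Additive ((𝓞 L)ˣ ⧸ NumberField.Units.torsion L)) :=
    AddCommGroup.toIntModule (Additive ((𝓞 L)ˣ ⧸ NumberField.Units.torsion L))
  let g' : Additive ((𝓞 M)ˣ ⧸ NumberField.Units.torsion M) →+
      Additive ((𝓞 L)ˣ ⧸ NumberField.Units.torsion L) := MonoidHom.toAdditive g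
  let g'' := AddMonoidHom.toIntLinearMap
      (M := Additive ((𝓞 M)ˣ ⧸ NumberField.Units.torsion M))
      (M₂ := Additive ((𝓞 L)ˣ ⧸ NumberField.Units.torsion L)) g'
  have hg' : Function.Injective g'' := hg
  have hfin : Module.Finite ℤ (Additive ((𝓞 L)ˣ ⧸ NumberField.Units.torsion L)) :=
    Module.Finite.of_basis (NumberField.Units.basisModTorsion L)
  have h := LinearMap.finrank_le_finrank_of_injective hg'
  rwa [finrank_eq_card_basis (NumberField.Units.basisModTorsion M),
    finrank_eq_card_basis (NumberField.Units.basisModTorsion L),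
    Fintype.card_fin, Fintype.card_fin] at h

end Aux

/-- Lemma `min2`(2), reformulated.  Let `L ⊆ M` be number fields with `L`
totally real and `[M : L] = 2`, and suppose `M` has a real embedding.  Then there is a unit
`x` of `𝒪_M` with `N_{M/L}(x) = 1` of infinite order. -/
theorem stmt_12 (L M : Type*) [Field L] [NumberField L] [Field M] [NumberField M]
    [Algebra L M]
    (htr : ∀ (σ : L →+* ℂ) (y : L), (σ y).im = 0)
    (hdeg : Module.finrank L M = 2)
    (hreal : Nonempty (M →+* ℝ)) :
    ∃ x : (𝓞 M)ˣ, Algebra.norm L (algebraMap (𝓞 M) M (x : 𝓞 M)) = 1 ∧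
      ∀ k : ℕ, 1 ≤ k → x ^ k ≠ 1 := by
  classical
  have hfd : FiniteDimensional L M :=
    Module.finite_of_finrank_pos (by rw [hdeg]; norm_num)
  -- counting infinite places
  set n := Module.finrank ℚ L with hn
  have hLreal : ∀ φ : L →+* ℂ, NumberField.ComplexEmbedding.IsReal φ := by
    intro φ
    rw [NumberField.ComplexEmbedding.isReal_iff]
    ext y
    rw [NumberField.ComplexEmbedding.conjugate_coe_eq]
    exact Complex.conj_eq_iff_im.mpr (htr φ y)
  have hLcomplex : NumberField.InfinitePlace.nrComplexPlaces L = 0 := by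
    rw [Fintype.card_eq_zero_iff]
    refine ⟨fun ⟨w, hw⟩ => ?_⟩
    exact (NumberField.InfinitePlace.not_isReal_iff_isComplex.mpr hw)
      (NumberField.InfinitePlace.isReal_iff.mpr (hLreal _))
  have hcardL : Fintype.card (NumberField.InfinitePlace L) = n := by
    have h1 := NumberField.InfinitePlace.card_eq_nrRealPlaces_add_nrComplexPlaces L
    have h2 := NumberField.InfinitePlace.card_add_two_mul_card_eq_rank L
    omega
  have hnpos : 0 < n := Module.finrank_pos
  -- M has a real place
  have hMreal : 0 < NumberField.InfinitePlace.nrRealPlaces M := by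
    obtain ⟨ρ⟩ := hreal
    have : NumberField.ComplexEmbedding.IsReal (Complex.ofRealHom.comp ρ) := by
      rw [NumberField.ComplexEmbedding.isReal_iff]
      ext y
      rw [NumberField.ComplexEmbedding.conjugate_coe_eq]
      exact Complex.conj_eq_iff_im.mpr rfl
    refine Fintype.card_pos_iff.mpr ⟨⟨NumberField.InfinitePlace.mk (Complex.ofRealHom.comp ρ),
      NumberField.InfinitePlace.isReal_mk_iff.mpr this⟩⟩
  have hMrank : Module.finrank ℚ M = n * 2 := by
    rw [hn, ← hdeg]
    exact (Module.finrank_mul_finrank ℚ L M).symm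
  have hcardM : n + 1 ≤ Fintype.card (NumberField.InfinitePlace M) := by
    have h1 := NumberField.InfinitePlace.card_eq_nrRealPlaces_add_nrComplexPlaces M
    have h2 := NumberField.InfinitePlace.card_add_two_mul_card_eq_rank M
    omega
  have hrank : NumberField.Units.rank L < NumberField.Units.rank M := by
    unfold NumberField.Units.rank
    omega
  -- the norm map on units
  let g : (𝓞 M)ˣ →* (𝓞 L)ˣ := Units.map (RingOfIntegers.norm L)
  -- there is a non-torsion unit in the kernel of g
  have key : ∃ x : (𝓞 M)ˣ, g x = 1 ∧ ¬ IsOfFinOrder x := by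
    by_contra h
    push_neg at h
    have hmono : NumberField.Units.torsion M ≤
        (NumberField.Units.torsion L).comap g := by
      intro x hx
      exact (CommGroup.mem_torsion _).mpr (g.isOfFinOrder ((CommGroup.mem_torsion _).mp hx))
    let gbar := QuotientGroup.map _ _ g hmono
    have hinj : Function.Injective gbar := by
      rw [injective_iff_map_eq_one]
      intro q hq
      induction q using QuotientGroup.induction_on with
      | H x =>
        have hx : (g x : ((𝓞 L)ˣ ⧸ NumberField.Units.torsion L)) = 1 := hq
        rw [QuotientGroup.eq_one_iff] at hx ⊢
        have : IsOfFinOrder (g x) := (CommGroup.mem_torsion _).mp hx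
        obtain ⟨k, hk, hk1⟩ := isOfFinOrder_iff_pow_eq_one.mp this
        have hxk : g (x ^ k) = 1 := by rw [map_pow]; exact hk1
        have : IsOfFinOrder (x ^ k) := h _ hxk
        exact (CommGroup.mem_torsion _).mpr (this.of_pow hk.ne')
    exact absurd (aux_rank_le gbar hinj) (not_le.mpr hrank)
  obtain ⟨x, hx1, hx2⟩ := key
  refine ⟨x, ?_, ?_⟩
  · have : RingOfIntegers.norm L (x : 𝓞 M) = 1 := by
      have := congrArg Units.val hx1
      exact this
    have h2 := congrArg (algebraMap (𝓞 L) L) this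
    rwa [map_one, ← RingOfIntegers.coe_eq_algebraMap, RingOfIntegers.coe_norm,
      RingOfIntegers.coe_eq_algebraMap] at h2
  · intro k hk hxk
    exact hx2 (isOfFinOrder_iff_pow_eq_one.mpr ⟨k, hk, hxk⟩)
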